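/- Let ω be a regular majorant, i an imaginary unit, and f a slice regular function on D⁴ that is continuous on the closed unit ball of ℍ. Assume there is C₀ > 0 with | ‖f(x)‖ − ‖f(y)‖ | ≤ C₀·ω(‖x − y‖) for all x, y ∈ S_i, and there is C₁ > 0 with ‖f(x) − f(y)‖ ≤ C₁·ω(‖x − y‖) for all x, y ∈ D_i. Then there exists C > 0 such that for each sign s ∈ {+1, −1} and every q ∈ D⁴ (with q₀ = Re q and 𝐪 = q − Re q) satisfying Re(q·conj(e^{it})) ≤ q₀·cos t + s·‖𝐪‖·sin t for all t ∈ [0, 2π], one has P_i[z ↦ ‖f(z)‖](q) − 2·‖f(q₀ + s·‖𝐪‖·i)‖ ≤ C·ω(1 − ‖q‖). -/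

import Mathlib

noncomputable section

notation "ℍ" => Quaternion ℝ

def IsImaginaryUnit (i : ℍ) : Prop := i.re = 0 ∧ ‖i‖ = 1

def OrthogonalUnits (i j : ℍ) : Prop :=
  IsImaginaryUnit i ∧ IsImaginaryUnit j ∧ (i * star j).re = 0

def qslice (i : ℍ) : Set ℍ := {z | ∃ x y : ℝ, z = (x : ℍ) + y • i}

def sliceDisc (i : ℍ) : Set ℍ := {z ∈ qslice i | ‖z‖ < 1}

def sliceCircle (i : ℍ) : Set ℍ := {z ∈ qslice i | ‖z‖ = 1}

def unitBall : Set ℍ := {q : ℍ | ‖q‖ < 1}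

structure IsMajorant (ω : ℝ → ℝ) : Prop where
  contOn : ContinuousOn ω (Set.Icc 0 2)
  map_zero : ω 0 = 0
  nonneg : ∀ t ∈ Set.Icc (0:ℝ) 2, 0 ≤ ω t
  mono : MonotoneOn ω (Set.Icc 0 2)
  div_anti : AntitoneOn (fun t => ω t / t) (Set.Ioc 0 2)

def IsRegularMajorant (ω : ℝ → ℝ) : Prop :=
  IsMajorant ω ∧ ∃ C > 0, ∀ x : ℝ, 0 < x → x < 2 →
    (∫ t in (0:ℝ)..x, ω t / t) + x * (∫ t in x..(2:ℝ), ω t / t ^ 2) ≤ C * ω x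

def SliceRegularOn (f : ℍ → ℍ) (a : ℕ → ℍ) : Prop :=
  (∀ r : ℝ, 0 ≤ r → r < 1 → Summable (fun n => ‖a n‖ * r ^ n)) ∧
  (∀ q ∈ unitBall, HasSum (fun n => q ^ n * a n) (f q))

def IsSliceRegular (f : ℍ → ℍ) : Prop := ∃ a : ℕ → ℍ, SliceRegularOn f a

def SliceDeriv (f f' : ℍ → ℍ) (a : ℕ → ℍ) : Prop :=
  SliceRegularOn f a ∧
  (∀ q ∈ unitBall, HasSum (fun n => ((n + 1 : ℕ) : ℝ) • (q ^ n * a (n + 1))) (f' q))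

def expI (i : ℍ) (t : ℝ) : ℍ := (Real.cos t : ℍ) + Real.sin t • i

def poisson (i : ℍ) (u : ℍ → ℝ) (q : ℍ) : ℝ :=
  (1 / (2 * Real.pi)) * ∫ t in (0:ℝ)..(2 * Real.pi),
    u (expI i t) * (1 - ‖q‖ ^ 2) / ‖q - expI i t‖ ^ 2

def comp1 (i : ℍ) (f : ℍ → ℍ) : ℍ → ℍ := fun q => (2⁻¹ : ℝ) • (f q - i * f q * i)

def comp2 (i j : ℍ) (f : ℍ → ℍ) : ℍ → ℍ := fun q => ((2⁻¹ : ℝ) • (f q + i * f q * i)) * j⁻¹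
open Real intervalIntegral
open scoped RealInnerProductSpace

lemma expI_def (i : ℍ) (t : ℝ) : expI i t = ((Real.cos t : ℝ):ℍ) + Real.sin t • i := rfl

lemma aux_norm {i : ℍ} (hi : IsImaginaryUnit i) (x y : ℝ) :
    ‖(x:ℍ) + y • i‖^2 = x^2 + y^2 := by
  rw [norm_add_sq_real]
  have h2 : ⟪(x:ℍ), y • i⟫ = 0 := by
    rw [real_inner_smul_right, Quaternion.inner_def]
    simp [Quaternion.coe_mul_eq_smul, hi.1]
  rw [h2, norm_smul, hi.2]
  simp [Real.norm_eq_abs, sq_abs]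

lemma aux_expI_norm {i : ℍ} (hi : IsImaginaryUnit i) (t : ℝ) : ‖expI i t‖ = 1 := by
  have h : ‖expI i t‖^2 = 1 := by
    rw [expI_def, aux_norm hi]
    rw [add_comm]; exact Real.sin_sq_add_cos_sq t
  nlinarith [norm_nonneg (expI i t)]

lemma aux_expI_circle {i : ℍ} (hi : IsImaginaryUnit i) (t : ℝ) :
    expI i t ∈ sliceCircle i :=
  ⟨⟨Real.cos t, Real.sin t, rfl⟩, aux_expI_norm hi t⟩

lemma aux_expI_sub {i : ℍ} (hi : IsImaginaryUnit i) (a b : ℝ) :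
    ‖expI i a - expI i b‖^2 = 2 - 2*Real.cos (a-b) := by
  have h : expI i a - expI i b = ((Real.cos a - Real.cos b : ℝ):ℍ)
      + (Real.sin a - Real.sin b) • i := by
    rw [expI_def, expI_def]; push_cast; rw [sub_smul]; abel
  rw [h, aux_norm hi, Real.cos_sub]
  linear_combination Real.sin_sq_add_cos_sq a + Real.sin_sq_add_cos_sq b

lemma aux_q_sub {i : ℍ} (hi : IsImaginaryUnit i) (r θ t : ℝ) :
    ‖((r*Real.cos θ : ℝ):ℍ) + (r*Real.sin θ) • i - expI i t‖^2
      = (1-r)^2 + r*(2-2*Real.cos (t-θ)) := by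
  have h : ((r*Real.cos θ : ℝ):ℍ) + (r*Real.sin θ) • i - expI i t
      = ((r*Real.cos θ - Real.cos t : ℝ):ℍ) + (r*Real.sin θ - Real.sin t) • i := by
    rw [expI_def]; push_cast; rw [sub_smul]; abel
  rw [h, aux_norm hi, Real.cos_sub]
  linear_combination (r^2) * Real.sin_sq_add_cos_sq θ + Real.sin_sq_add_cos_sq t

lemma aux_slice_id {i : ℍ} (hi : IsImaginaryUnit i) (s : ℝ) (hs : s = 1 ∨ s = -1) (q : ℍ)
    (hcond : ∀ t ∈ Set.Icc (0:ℝ) (2 * Real.pi),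
      (q * star (expI i t)).re ≤
        q.re * Real.cos t + s * (‖q - ((q.re : ℝ) : ℍ)‖ * Real.sin t)) :
    q = ((q.re : ℝ) : ℍ) + (s * ‖q - ((q.re : ℝ) : ℍ)‖) • i := by
  set a : ℍ := q - ((q.re : ℝ) : ℍ) with ha
  set n : ℝ := ‖a‖ with hn
  have hs2 : s * s = 1 := by rcases hs with h | h <;> simp [h]
  have hpi := Real.pi_pos
  have h1 : expI i (Real.pi/2) = i := by
    rw [expI_def, Real.cos_pi_div_two, Real.sin_pi_div_two]; simp
  have h2 : expI i (3*Real.pi/2) = -i := by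
    have h3 : (3*Real.pi/2 : ℝ) = Real.pi/2 + Real.pi := by ring
    rw [expI_def, h3, Real.cos_add_pi, Real.sin_add_pi, Real.cos_pi_div_two,
      Real.sin_pi_div_two]
    simp
  have e1 := hcond (Real.pi/2) ⟨by positivity, by linarith⟩
  have e2 := hcond (3*Real.pi/2) ⟨by positivity, by linarith⟩
  rw [h1, Real.cos_pi_div_two, Real.sin_pi_div_two] at e1
  rw [h2] at e2
  have h3 : (3*Real.pi/2 : ℝ) = Real.pi/2 + Real.pi := by ring
  rw [h3, Real.cos_add_pi, Real.sin_add_pi, Real.cos_pi_div_two, Real.sin_pi_div_two] at e2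
  simp only [star_neg, mul_neg, Quaternion.re_neg, mul_zero, zero_add, mul_one,
    neg_le, mul_neg_one, neg_neg, neg_zero] at e1 e2
  -- e1 : (q * star i).re ≤ s * n ; e2 : s*n ≤ (q * star i).re (roughly)
  have hqi : ⟪q, i⟫ = s * n := by
    rw [Quaternion.inner_def]
    exact le_antisymm e1 e2
  have hai : ⟪a, s • i⟫ = ‖a‖ * ‖s • i‖ := by
    have hxi : ⟪((q.re : ℝ):ℍ), i⟫ = 0 := by
      rw [Quaternion.inner_def]
      simp [Quaternion.coe_mul_eq_smul, hi.1]
    have : ⟪a, i⟫ = s * n := by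
      rw [ha, inner_sub_left, hxi, hqi]; ring
    rw [real_inner_smul_right, this, norm_smul, hi.2]
    rcases hs with h | h <;> simp [h] <;> ring
  have := (inner_eq_norm_mul_iff_real).mp hai
  rw [norm_smul, hi.2] at this
  have habs : ‖(s:ℝ)‖ = 1 := by rcases hs with h | h <;> simp [h]
  rw [habs] at this
  simp only [mul_one, one_smul] at this
  rw [smul_smul] at this
  have h4 : q - ((q.re:ℝ):ℍ) = (s*n) • i := by
    rw [← ha, this, ← hn, mul_comm]
  rw [← h4]; abel

lemma aux_polar (x y r : ℝ) (hr : 0 ≤ r) (h : x^2 + y^2 = r^2) :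
    ∃ θ, x = r * Real.cos θ ∧ y = r * Real.sin θ := by
  rcases eq_or_lt_of_le hr with h0 | h0
  · subst h0
    exact ⟨0, by nlinarith [sq_nonneg x, sq_nonneg y], by nlinarith [sq_nonneg x, sq_nonneg y]⟩
  · set z : ℂ := ⟨x, y⟩ with hz
    have habs : ‖z‖ = r := by
      rw [Complex.norm_def, Complex.normSq_mk]
      rw [show x*x + y*y = r^2 by nlinarith]
      exact Real.sqrt_sq hr
    have hz0 : z ≠ 0 := by
      intro h'; rw [h', norm_zero] at habs; linarith
    refine ⟨Complex.arg z, ?_, ?_⟩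
    · rw [Complex.cos_arg hz0, habs]; field_simp; rfl
    · rw [Complex.sin_arg, habs]; field_simp; rfl

lemma aux_smul_slice {i : ℍ} (hi : IsImaginaryUnit i) (ρ θ : ℝ) (hρ : |ρ| < 1) :
    ρ • expI i θ ∈ sliceDisc i := by
  constructor
  · exact ⟨ρ * Real.cos θ, ρ * Real.sin θ, by
      rw [expI_def, smul_add, smul_smul]; push_cast; simp [Quaternion.coe_mul_eq_smul]⟩
  · rw [norm_smul, aux_expI_norm hi, mul_one, Real.norm_eq_abs]; exact hρ

lemma aux_boundary {ω : ℝ → ℝ} (hmaj : IsMajorant ω) {i : ℍ} (hi : IsImaginaryUnit i)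
    {f : ℍ → ℍ} (hcont : ContinuousOn f (Metric.closedBall 0 1))
    {C₁ : ℝ} (hC₁ : 0 < C₁)
    (hlip : ∀ x ∈ sliceDisc i, ∀ y ∈ sliceDisc i, ‖f x - f y‖ ≤ C₁ * ω ‖x - y‖)
    (r θ : ℝ) (hr0 : 0 ≤ r) (hr1 : r < 1) :
    ‖f (expI i θ)‖ ≤ ‖f (r • expI i θ)‖ + C₁ * ω (1 - r) := by
  have hecb : expI i θ ∈ Metric.closedBall (0:ℍ) 1 := by
    rw [Metric.mem_closedBall, dist_zero_right, aux_expI_norm hi]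
  have h1 : Filter.Tendsto (fun ρ : ℝ => ρ • expI i θ) (nhdsWithin 1 (Set.Iio 1))
      (nhdsWithin (expI i θ) (Metric.closedBall 0 1)) := by
    apply tendsto_nhdsWithin_of_tendsto_nhds_of_eventually_within
    · have : Filter.Tendsto (fun ρ : ℝ => ρ • expI i θ) (nhds 1) (nhds (expI i θ)) := by
        exact (continuous_id.smul continuous_const).tendsto' 1 (expI i θ) (by simp)
      exact this.mono_left nhdsWithin_le_nhds
    · filter_upwards [Ioo_mem_nhdsLT_of_mem (Set.mem_Ioc.mpr ⟨zero_lt_one, le_refl 1⟩)]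
        with ρ hρ
      rw [Metric.mem_closedBall, dist_zero_right, norm_smul, aux_expI_norm hi, mul_one,
        Real.norm_eq_abs, abs_of_pos hρ.1]
      exact le_of_lt hρ.2
  have htend : Filter.Tendsto (fun ρ : ℝ => ‖f (ρ • expI i θ)‖) (nhdsWithin 1 (Set.Iio 1))
      (nhds ‖f (expI i θ)‖) :=
    (((hcont (expI i θ) hecb)).tendsto.comp h1).norm
  refine le_of_tendsto htend ?_
  filter_upwards [Ioo_mem_nhdsLT_of_mem (Set.mem_Ioc.mpr ⟨hr1, le_refl 1⟩)] with ρ hρ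
  have hρd : ρ • expI i θ ∈ sliceDisc i :=
    aux_smul_slice hi ρ θ (by rw [abs_of_pos (lt_of_le_of_lt hr0 hρ.1)]; exact hρ.2)
  have hrd : r • expI i θ ∈ sliceDisc i :=
    aux_smul_slice hi r θ (by rw [abs_of_nonneg hr0]; exact hr1)
  have hd := hlip _ hρd _ hrd
  have hdist : ‖ρ • expI i θ - r • expI i θ‖ = ρ - r := by
    rw [← sub_smul, norm_smul, aux_expI_norm hi, mul_one, Real.norm_eq_abs,
      abs_of_pos (by linarith [hρ.1])]
  rw [hdist] at hd
  have hω : ω (ρ - r) ≤ ω (1 - r) := by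
    apply hmaj.mono ⟨by linarith [hρ.1], by linarith [hρ.2]⟩ ⟨by linarith, by linarith⟩
    linarith [hρ.2]
  calc ‖f (ρ • expI i θ)‖ ≤ ‖f (r • expI i θ)‖ + ‖f (ρ • expI i θ) - f (r • expI i θ)‖ := by
        have := norm_sub_norm_le (f (ρ • expI i θ)) (f (r • expI i θ)); linarith
    _ ≤ ‖f (r • expI i θ)‖ + C₁ * ω (1 - r) := by
        have := mul_le_mul_of_nonneg_left hω (le_of_lt hC₁); linarith

set_option maxHeartbeats 1000000
lemma aux_arctan_int (k : ℝ) (hk : 0 < k) (a b : ℝ) :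
    ∫ s in a..b, 1/(k^2+s^2) = (1/k) * Real.arctan (b/k) - (1/k) * Real.arctan (a/k) := by
  have hderiv : ∀ s ∈ Set.uIcc a b, HasDerivAt (fun u : ℝ => (1/k) * Real.arctan (u/k))
      (1/(k^2+s^2)) s := by
    intro s _
    have h1 : HasDerivAt (fun u : ℝ => u/k) (1/k) s := (hasDerivAt_id s).div_const k
    have h2 := (Real.hasDerivAt_arctan (s/k)).comp s h1
    have h3 := h2.const_mul (1/k)
    refine h3.congr_deriv ?_
    have hk0 : k ≠ 0 := hk.ne'
    field_simp
  have hint : IntervalIntegrable (fun s : ℝ => 1/(k^2+s^2)) MeasureTheory.volume a b :=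
    (continuous_const.div (by continuity) (fun s => by positivity)).intervalIntegrable _ _
  rw [intervalIntegral.integral_eq_sub_of_hasDerivAt hderiv hint]

lemma aux_int_K (r : ℝ) (hr0 : 0 ≤ r) (hr1 : r < 1) :
    ∫ s in (-Real.pi)..Real.pi, (1-r^2)/((1-r)^2 + r*(2-2*Real.cos s)) ≤ 4*Real.pi := by
  have hpi := Real.pi_pos
  have hdenc : Continuous (fun s : ℝ => (1-r)^2 + r*(2-2*Real.cos s)) := by continuity
  have hdenpos : ∀ s : ℝ, 0 < (1-r)^2 + r*(2-2*Real.cos s) := by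
    intro s; nlinarith [Real.cos_le_one s]
  have hKint : IntervalIntegrable (fun s => (1-r^2)/((1-r)^2 + r*(2-2*Real.cos s)))
      MeasureTheory.volume (-Real.pi) Real.pi :=
    (continuous_const.div hdenc (fun s => ne_of_gt (hdenpos s))).intervalIntegrable _ _
  rcases le_or_gt r (1/3) with hr3 | hr3
  · have hle : ∀ s ∈ Set.Icc (-Real.pi) Real.pi,
        (1-r^2)/((1-r)^2 + r*(2-2*Real.cos s)) ≤ 2 := by
      intro s _
      rw [div_le_iff₀ (hdenpos s)]
      nlinarith [Real.cos_le_one s]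
    calc ∫ s in (-Real.pi)..Real.pi, (1-r^2)/((1-r)^2 + r*(2-2*Real.cos s))
        ≤ ∫ _ in (-Real.pi)..Real.pi, (2:ℝ) :=
          intervalIntegral.integral_mono_on (by linarith) hKint intervalIntegrable_const hle
      _ = 4*Real.pi := by
          rw [intervalIntegral.integral_const]; simp; ring
  · -- r > 1/3
    set c : ℝ := 2*Real.sqrt r/Real.pi with hc
    have hrpos : (0:ℝ) < r := by linarith
    have hsq : Real.sqrt r ^ 2 = r := Real.sq_sqrt hr0
    have hsqpos : 0 < Real.sqrt r := Real.sqrt_pos.mpr hrpos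
    have hcpos : 0 < c := by positivity
    have hc2 : c^2 = 4*r/Real.pi^2 := by
      rw [hc, div_pow, mul_pow, hsq]; norm_num
    have hδpos : 0 < 1 - r := by linarith
    have hnum : 0 ≤ 1 - r^2 := by nlinarith
    set k : ℝ := (1-r)/c with hk
    have hkpos : 0 < k := by positivity
    have hle : ∀ s ∈ Set.Icc (-Real.pi) Real.pi,
        (1-r^2)/((1-r)^2 + r*(2-2*Real.cos s))
          ≤ ((1-r^2)/c^2) * (1/(k^2+s^2)) := by
      intro s hsmem
      have habs : |s| ≤ Real.pi := abs_le.mpr ⟨hsmem.1, hsmem.2⟩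
      have hcos := Real.cos_le_one_sub_mul_cos_sq habs
      have h' : 2*Real.pi^2*Real.cos s ≤ 2*Real.pi^2 - 4*s^2 := by
        have h2 := mul_le_mul_of_nonneg_left hcos (le_of_lt (by positivity : (0:ℝ) < 2*Real.pi^2))
        calc 2*Real.pi^2*Real.cos s ≤ 2*Real.pi^2 * (1 - 2/Real.pi^2*s^2) := h2
          _ = 2*Real.pi^2 - 4*s^2 := by field_simp; ring
      have hden2 : (1-r)^2 + c^2*s^2 ≤ (1-r)^2 + r*(2-2*Real.cos s) := by
        have h3 : c^2*s^2 ≤ r*(2-2*Real.cos s) := by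
          rw [hc2, div_mul_eq_mul_div, div_le_iff₀ (by positivity)]
          nlinarith [mul_le_mul_of_nonneg_left h' hr0]
        linarith
      have h2 : ((1-r^2)/c^2) * (1/(k^2+s^2)) = (1-r^2)/((1-r)^2 + c^2*s^2) := by
        have hkk : c^2*(k^2+s^2) = (1-r)^2 + c^2*s^2 := by
          rw [hk]; field_simp
        rw [div_mul_div_comm, mul_one, hkk]
      rw [h2]
      exact div_le_div_of_nonneg_left hnum (by positivity) hden2
    have hint2 : IntervalIntegrable (fun s : ℝ => ((1-r^2)/c^2) * (1/(k^2+s^2)))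
        MeasureTheory.volume (-Real.pi) Real.pi :=
      (continuous_const.mul (continuous_const.div (by continuity)
        (fun s => by positivity))).intervalIntegrable _ _
    calc ∫ s in (-Real.pi)..Real.pi, (1-r^2)/((1-r)^2 + r*(2-2*Real.cos s))
        ≤ ∫ s in (-Real.pi)..Real.pi, ((1-r^2)/c^2) * (1/(k^2+s^2)) :=
          intervalIntegral.integral_mono_on (by linarith) hKint hint2 hle
      _ = ((1-r^2)/c^2) * ∫ s in (-Real.pi)..Real.pi, 1/(k^2+s^2) :=
          intervalIntegral.integral_const_mul _ _
      _ = ((1-r^2)/c^2) * ((1/k) * Real.arctan (Real.pi/k) - (1/k) * Real.arctan (-Real.pi/k)) := by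
          rw [aux_arctan_int k hkpos]
      _ ≤ ((1-r^2)/c^2) * ((1/k) * Real.pi) := by
          apply mul_le_mul_of_nonneg_left _ (by positivity)
          have h4 := Real.arctan_lt_pi_div_two (Real.pi/k)
          have h5 := Real.neg_pi_div_two_lt_arctan (-Real.pi/k)
          have h6 : 0 < 1/k := by positivity
          nlinarith
      _ ≤ 4*Real.pi := by
          have h7 : ((1-r^2)/c^2) * ((1/k) * Real.pi) = ((1-r^2)/(c*(1-r))) * Real.pi := by
            rw [hk]; field_simp
          rw [h7]
          rw [div_mul_eq_mul_div, div_le_iff₀ (by positivity)]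
          -- (1-r^2)*π ≤ 4π*(c*(1-r))  ⟸  π(1+r) ≤ 8√r
          have h8 : Real.pi * (1 + r) ≤ 8 * Real.sqrt r := by
            have hpilt := Real.pi_lt_d2
            have ht05 : 1/2 ≤ Real.sqrt r := by nlinarith
            have ht1 : Real.sqrt r ≤ 1 := by nlinarith
            nlinarith [mul_nonneg (by linarith : (0:ℝ) ≤ Real.sqrt r - 1/2)
              (by linarith : (0:ℝ) ≤ 1 - Real.sqrt r)]
          have h9 : 4*Real.pi*(c*(1-r)) = 8*Real.sqrt r*(1-r) := by
            rw [hc]; field_simp; ring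
          rw [h9]
          nlinarith [mul_le_mul_of_nonneg_right h8 (le_of_lt hδpos)]

lemma aux_sqrt_mem (s : ℝ) : Real.sqrt (2-2*Real.cos s) ∈ Set.Icc (0:ℝ) 2 := by
  constructor
  · exact Real.sqrt_nonneg _
  · have h4 : Real.sqrt 4 = 2 := by
      rw [show (4:ℝ) = 2^2 by norm_num, Real.sqrt_sq (by norm_num)]
    have h5 : Real.sqrt (2-2*Real.cos s) ≤ Real.sqrt 4 :=
      Real.sqrt_le_sqrt (by nlinarith [Real.neg_one_le_cos s])
    linarith

lemma aux_sqrt_le_abs (s : ℝ) : Real.sqrt (2-2*Real.cos s) ≤ |s| := by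
  rw [← Real.sqrt_sq_eq_abs]
  apply Real.sqrt_le_sqrt
  nlinarith [Real.one_sub_sq_div_two_le_cos (x := s)]

lemma aux_int_inv_sq : ∫ s in (2:ℝ)..Real.pi, 1/s^2 = 1/2 - 1/Real.pi := by
  have hpi := Real.pi_gt_three
  have hderiv : ∀ s ∈ Set.uIcc (2:ℝ) Real.pi, HasDerivAt (fun u : ℝ => -u⁻¹) (1/s^2) s := by
    intro s hs
    rw [Set.uIcc_of_le (by linarith)] at hs
    have hs0 : s ≠ 0 := by intro h; rw [h] at hs; linarith [hs.1]
    have h1 := (hasDerivAt_inv hs0).neg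
    rw [one_div, ← neg_neg (s ^ 2)⁻¹]
    exact h1
  have hint : IntervalIntegrable (fun s : ℝ => 1/s^2) MeasureTheory.volume 2 Real.pi := by
    apply ContinuousOn.intervalIntegrable
    apply ContinuousOn.div continuousOn_const (by fun_prop)
    intro s hs
    rw [Set.uIcc_of_le (by linarith)] at hs
    have : (0:ℝ) < s := by linarith [hs.1]
    positivity
  rw [intervalIntegral.integral_eq_sub_of_hasDerivAt hderiv hint]
  rw [one_div, one_div]
  ring

lemma aux_tail {ω : ℝ → ℝ} (hmaj : IsMajorant ω) (Cw : ℝ) (hCw : 0 < Cw)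
    (hreg : ∀ x : ℝ, 0 < x → x < 2 →
      (∫ t in (0:ℝ)..x, ω t / t) + x * (∫ t in x..(2:ℝ), ω t / t ^ 2) ≤ Cw * ω x)
    (r : ℝ) (hr3 : 1/3 < r) (hr1 : r < 1) :
    ∫ s in (1-r)..Real.pi,
        ω (Real.sqrt (2-2*Real.cos s)) * ((1-r^2)/((1-r)^2 + r*(2-2*Real.cos s)))
      ≤ (3*Real.pi^2/2)*(Cw+1)*ω (1-r) := by
  have hpi := Real.pi_gt_three
  have hpi0 := Real.pi_pos
  set δ : ℝ := 1 - r with hδdef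
  have hδpos : 0 < δ := by simp only [hδdef]; linarith
  have hδ23 : δ < 2/3 := by simp only [hδdef]; linarith
  have hδπ : δ ≤ Real.pi := by linarith
  have hωδ : 0 ≤ ω δ := hmaj.nonneg δ ⟨le_of_lt hδpos, by linarith⟩
  have hdenpos : ∀ s : ℝ, 0 < (1-r)^2 + r*(2-2*Real.cos s) := by
    intro s; nlinarith [Real.cos_le_one s]
  -- continuity facts
  have hWc : Continuous (fun s : ℝ => ω (Real.sqrt (2-2*Real.cos s))) := by
    apply ContinuousOn.comp_continuous hmaj.contOn (by continuity)
    exact fun s => aux_sqrt_mem s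
  have hKc : Continuous (fun s : ℝ => (1-r^2)/((1-r)^2 + r*(2-2*Real.cos s))) :=
    continuous_const.div (by continuity) (fun s => ne_of_gt (hdenpos s))
  have hWKint : IntervalIntegrable
      (fun s => ω (Real.sqrt (2-2*Real.cos s)) * ((1-r^2)/((1-r)^2 + r*(2-2*Real.cos s))))
      MeasureTheory.volume δ Real.pi := (hWc.mul hKc).intervalIntegrable _ _
  have hmin_cont : ContinuousOn (fun s : ℝ => ω (min s 2) / s ^ 2) (Set.uIcc δ Real.pi) := by
    rw [Set.uIcc_of_le hδπ]
    apply ContinuousOn.div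
    · apply hmaj.contOn.comp ((continuous_id.min continuous_const).continuousOn)
      intro s hs
      simp only [Set.mem_Icc, id_eq] at hs ⊢
      exact ⟨le_min (by linarith [hs.1]) (by norm_num), min_le_right _ _⟩
    · fun_prop
    · intro s hs
      have : (0:ℝ) < s := lt_of_lt_of_le hδpos hs.1
      positivity
  have hminint : IntervalIntegrable (fun s : ℝ => ω (min s 2) / s ^ 2)
      MeasureTheory.volume δ Real.pi := hmin_cont.intervalIntegrable
  -- pointwise bound on [δ, π]
  have hptwise : ∀ s ∈ Set.Icc δ Real.pi,
      ω (Real.sqrt (2-2*Real.cos s)) * ((1-r^2)/((1-r)^2 + r*(2-2*Real.cos s)))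
        ≤ (3*Real.pi^2/2)*δ * (ω (min s 2) / s ^ 2) := by
    intro s hs
    have hs0 : 0 < s := lt_of_lt_of_le hδpos hs.1
    have habs : |s| ≤ Real.pi := abs_le.mpr ⟨by linarith, hs.2⟩
    have hW : ω (Real.sqrt (2-2*Real.cos s)) ≤ ω (min s 2) := by
      apply hmaj.mono (aux_sqrt_mem s)
        ⟨le_min (le_of_lt hs0) (by norm_num), min_le_right _ _⟩
      have := aux_sqrt_le_abs s
      rw [abs_of_pos hs0] at this
      exact le_min this (aux_sqrt_mem s).2
    have hWnn : 0 ≤ ω (Real.sqrt (2-2*Real.cos s)) := hmaj.nonneg _ (aux_sqrt_mem s)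
    have hK : (1-r^2)/((1-r)^2 + r*(2-2*Real.cos s)) ≤ ((3*Real.pi^2/2)*δ) / s^2 := by
      rw [div_le_div_iff₀ (hdenpos s) (by positivity)]
      have hπ2 : (0:ℝ) < Real.pi^2 := by positivity
      have h2 : 4*s^2 ≤ (2-2*Real.cos s)*Real.pi^2 := by
        have hc := Real.cos_le_one_sub_mul_cos_sq habs
        have h2a : (2/Real.pi^2*s^2)*Real.pi^2 = 2*s^2 := by field_simp
        nlinarith [mul_le_mul_of_nonneg_right hc (le_of_lt hπ2)]
      have h3 : 0 ≤ 2-2*Real.cos s := by nlinarith [Real.cos_le_one s]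
      have h4 : δ*(4*s^2) ≤ δ*((2-2*Real.cos s)*Real.pi^2) :=
        mul_le_mul_of_nonneg_left h2 (le_of_lt hδpos)
      have h5 : 0 ≤ (r - 1/3)*((2-2*Real.cos s)*Real.pi^2)*δ :=
        mul_nonneg (mul_nonneg (by linarith) (by nlinarith [Real.cos_le_one s]))
          (le_of_lt hδpos)
      nlinarith [sq_nonneg s, mul_nonneg (mul_nonneg (le_of_lt hδpos) (le_of_lt hδpos))
        (le_of_lt hδpos), sq_nonneg (1-r), mul_nonneg (sq_nonneg (1-r)) (le_of_lt hδpos),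
        mul_nonneg (mul_nonneg (le_of_lt hpi0) (le_of_lt hpi0)) (sq_nonneg (1-r))]
    have hKnn : 0 ≤ (1-r^2)/((1-r)^2 + r*(2-2*Real.cos s)) := by
      apply div_nonneg (by nlinarith) (le_of_lt (hdenpos s))
    calc ω (Real.sqrt (2-2*Real.cos s)) * ((1-r^2)/((1-r)^2 + r*(2-2*Real.cos s)))
        ≤ ω (min s 2) * (((3*Real.pi^2/2)*δ) / s^2) := by
          apply mul_le_mul hW hK hKnn
          exact le_trans hWnn hW
      _ = (3*Real.pi^2/2)*δ * (ω (min s 2) / s ^ 2) := by ring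
  -- integrate
  have hstep1 : ∫ s in δ..Real.pi,
      ω (Real.sqrt (2-2*Real.cos s)) * ((1-r^2)/((1-r)^2 + r*(2-2*Real.cos s)))
      ≤ (3*Real.pi^2/2)*δ * ∫ s in δ..Real.pi, ω (min s 2) / s ^ 2 := by
    rw [← intervalIntegral.integral_const_mul]
    apply intervalIntegral.integral_mono_on hδπ hWKint (hminint.const_mul _) hptwise
  -- split the integral at 2
  have hint1 : IntervalIntegrable (fun s : ℝ => ω (min s 2) / s ^ 2)
      MeasureTheory.volume δ 2 := by
    apply hminint.mono_set
    rw [Set.uIcc_of_le hδπ, Set.uIcc_of_le (by linarith : δ ≤ 2)]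
    exact Set.Icc_subset_Icc (le_refl _) (by linarith)
  have hint2 : IntervalIntegrable (fun s : ℝ => ω (min s 2) / s ^ 2)
      MeasureTheory.volume 2 Real.pi := by
    apply hminint.mono_set
    rw [Set.uIcc_of_le hδπ, Set.uIcc_of_le (by linarith : (2:ℝ) ≤ Real.pi)]
    exact Set.Icc_subset_Icc (by linarith) (le_refl _)
  have hsplit : ∫ s in δ..Real.pi, ω (min s 2) / s ^ 2
      = (∫ s in δ..(2:ℝ), ω (min s 2) / s ^ 2) + ∫ s in (2:ℝ)..Real.pi, ω (min s 2) / s ^ 2 :=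
    (intervalIntegral.integral_add_adjacent_intervals hint1 hint2).symm
  have hcongr1 : ∫ s in δ..(2:ℝ), ω (min s 2) / s ^ 2 = ∫ s in δ..(2:ℝ), ω s / s ^ 2 := by
    apply intervalIntegral.integral_congr
    intro s hs
    rw [Set.uIcc_of_le (by linarith : δ ≤ 2)] at hs
    simp only [min_eq_left hs.2]
  have hcongr2 : ∫ s in (2:ℝ)..Real.pi, ω (min s 2) / s ^ 2
      = ω 2 * (1/2 - 1/Real.pi) := by
    rw [← aux_int_inv_sq, ← intervalIntegral.integral_const_mul]
    apply intervalIntegral.integral_congr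
    intro s hs
    rw [Set.uIcc_of_le (by linarith : (2:ℝ) ≤ Real.pi)] at hs
    show ω (min s 2) / s ^ 2 = ω 2 * (1/s^2)
    rw [min_eq_right hs.1, mul_one_div]
  -- regularity bound
  have hreg1 : δ * ∫ s in δ..(2:ℝ), ω s / s ^ 2 ≤ Cw * ω δ := by
    have h0 : 0 ≤ ∫ t in (0:ℝ)..δ, ω t / t := by
      apply intervalIntegral.integral_nonneg (le_of_lt hδpos)
      intro t ht
      rcases eq_or_lt_of_le ht.1 with h | h
      · rw [← h, hmaj.map_zero]; norm_num
      · exact div_nonneg (hmaj.nonneg t ⟨le_of_lt h, by linarith [ht.2]⟩) (le_of_lt h)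
    have := hreg δ hδpos (by linarith)
    linarith
  have hω2 : δ * ω 2 ≤ 2 * ω δ := by
    have := hmaj.div_anti ⟨hδpos, by linarith⟩ ⟨by norm_num, le_refl 2⟩ (by linarith)
    -- ω 2 / 2 ≤ ω δ / δ
    rw [div_le_div_iff₀ (by norm_num) hδpos] at this
    linarith
  -- assemble
  calc ∫ s in δ..Real.pi,
        ω (Real.sqrt (2-2*Real.cos s)) * ((1-r^2)/((1-r)^2 + r*(2-2*Real.cos s)))
      ≤ (3*Real.pi^2/2)*δ * ∫ s in δ..Real.pi, ω (min s 2) / s ^ 2 := hstep1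
    _ = (3*Real.pi^2/2) * (δ * ∫ s in δ..(2:ℝ), ω s / s ^ 2)
        + (3*Real.pi^2/2) * (δ * (ω 2 * (1/2 - 1/Real.pi))) := by
        rw [hsplit, hcongr1, hcongr2]; ring
    _ ≤ (3*Real.pi^2/2) * (Cw * ω δ) + (3*Real.pi^2/2) * ω δ := by
        have hc : 0 ≤ (3*Real.pi^2/2) := by positivity
        have h6 : δ * (ω 2 * (1/2 - 1/Real.pi)) ≤ ω δ := by
          have h7 : 0 ≤ ω 2 := hmaj.nonneg 2 ⟨by norm_num, le_refl 2⟩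
          have h8 : δ * (ω 2 * (1/2 - 1/Real.pi)) ≤ δ * (ω 2 * (1/2)) := by
            apply mul_le_mul_of_nonneg_left _ (le_of_lt hδpos)
            apply mul_le_mul_of_nonneg_left _ h7
            have : 0 < 1/Real.pi := by positivity
            linarith
          nlinarith
        have h9 := mul_le_mul_of_nonneg_left hreg1 hc
        have h10 := mul_le_mul_of_nonneg_left h6 hc
        linarith
    _ = (3*Real.pi^2/2)*(Cw+1)*ω δ := by ring

lemma aux_int_omegaK {ω : ℝ → ℝ} (hmaj : IsMajorant ω) (Cw : ℝ) (hCw : 0 < Cw)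
    (hreg : ∀ x : ℝ, 0 < x → x < 2 →
      (∫ t in (0:ℝ)..x, ω t / t) + x * (∫ t in x..(2:ℝ), ω t / t ^ 2) ≤ Cw * ω x)
    (r : ℝ) (hr0 : 0 ≤ r) (hr1 : r < 1) :
    ∫ s in (-Real.pi)..Real.pi,
        ω (Real.sqrt (2-2*Real.cos s)) * ((1-r^2)/((1-r)^2 + r*(2-2*Real.cos s)))
      ≤ (12*Real.pi + 4 + 3*Real.pi^2*(Cw+1)) * ω (1-r) := by
  have hpi := Real.pi_gt_three
  have hpi0 := Real.pi_pos
  set g : ℝ → ℝ := fun s =>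
    ω (Real.sqrt (2-2*Real.cos s)) * ((1-r^2)/((1-r)^2 + r*(2-2*Real.cos s))) with hg
  have hδpos : 0 < 1 - r := by linarith
  have hδ2 : 1 - r ≤ 2 := by linarith
  have hωδ : 0 ≤ ω (1-r) := hmaj.nonneg _ ⟨le_of_lt hδpos, hδ2⟩
  have hdenpos : ∀ s : ℝ, 0 < (1-r)^2 + r*(2-2*Real.cos s) := by
    intro s; nlinarith [Real.cos_le_one s]
  have hWc : Continuous (fun s : ℝ => ω (Real.sqrt (2-2*Real.cos s))) := by
    apply ContinuousOn.comp_continuous hmaj.contOn (by continuity)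
    exact fun s => aux_sqrt_mem s
  have hKc : Continuous (fun s : ℝ => (1-r^2)/((1-r)^2 + r*(2-2*Real.cos s))) :=
    continuous_const.div (by continuity) (fun s => ne_of_gt (hdenpos s))
  have hgc : Continuous g := hWc.mul hKc
  have hnum : (0:ℝ) ≤ 1 - r^2 := by nlinarith
  have hωδdiv : ω 2 ≤ (2/(1-r)) * ω (1-r) := by
    have := hmaj.div_anti ⟨hδpos, hδ2⟩ ⟨by norm_num, le_refl 2⟩ hδ2
    rw [div_le_div_iff₀ (by norm_num) hδpos] at this
    rw [div_mul_eq_mul_div, le_div_iff₀ hδpos]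
    linarith
  rcases le_or_gt r (1/3) with hr3 | hr3
  · -- r ≤ 1/3 : δ ≥ 2/3
    have hδ3 : 2/3 ≤ 1 - r := by linarith
    have hbound : ∀ s ∈ Set.Icc (-Real.pi) Real.pi, g s ≤ 6 * ω (1-r) := by
      intro s _
      have hW : ω (Real.sqrt (2-2*Real.cos s)) ≤ ω 2 :=
        hmaj.mono (aux_sqrt_mem s) ⟨by norm_num, le_refl 2⟩ (aux_sqrt_mem s).2
      have hW2 : ω 2 ≤ 3 * ω (1-r) := by
        have h1 : (2/(1-r)) ≤ 3 := by rw [div_le_iff₀ hδpos]; linarith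
        calc ω 2 ≤ (2/(1-r)) * ω (1-r) := hωδdiv
          _ ≤ 3 * ω (1-r) := mul_le_mul_of_nonneg_right h1 hωδ
      have hK : (1-r^2)/((1-r)^2 + r*(2-2*Real.cos s)) ≤ 2 := by
        rw [div_le_iff₀ (hdenpos s)]
        nlinarith [Real.cos_le_one s]
      have hWnn : 0 ≤ ω (Real.sqrt (2-2*Real.cos s)) := hmaj.nonneg _ (aux_sqrt_mem s)
      calc g s ≤ (3 * ω (1-r)) * 2 := by
            apply mul_le_mul (le_trans hW hW2) hK
              (div_nonneg hnum (le_of_lt (hdenpos s))) (by linarith)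
        _ = 6 * ω (1-r) := by ring
    calc ∫ s in (-Real.pi)..Real.pi, g s ≤ ∫ _ in (-Real.pi)..Real.pi, 6 * ω (1-r) :=
          intervalIntegral.integral_mono_on (by linarith)
            (hgc.intervalIntegrable _ _) intervalIntegrable_const hbound
      _ = 2*Real.pi * (6 * ω (1-r)) := by
          rw [intervalIntegral.integral_const, smul_eq_mul]; ring
      _ ≤ (12*Real.pi + 4 + 3*Real.pi^2*(Cw+1)) * ω (1-r) := by
          have h2 : 0 ≤ 4 + 3*Real.pi^2*(Cw+1) := by positivity
          nlinarith
  · -- r > 1/3 : δ < 2/3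
    have hδ23 : 1 - r < 2/3 := by linarith
    have hδπ : 1 - r ≤ Real.pi := by linarith
    have hsplit : ∫ s in (-Real.pi)..Real.pi, g s
        = (∫ s in (-Real.pi)..(-(1-r)), g s) + (∫ s in (-(1-r))..(1-r), g s)
          + ∫ s in (1-r)..Real.pi, g s := by
      rw [intervalIntegral.integral_add_adjacent_intervals
        (hgc.intervalIntegrable _ _) (hgc.intervalIntegrable _ _),
        intervalIntegral.integral_add_adjacent_intervals
        (hgc.intervalIntegrable _ _) (hgc.intervalIntegrable _ _)]
    have hleft : ∫ s in (-Real.pi)..(-(1-r)), g s = ∫ s in (1-r)..Real.pi, g s := by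
      rw [← intervalIntegral.integral_comp_neg g]
      apply intervalIntegral.integral_congr
      intro s _
      show g (-s) = g s
      rw [hg]
      simp only [Real.cos_neg]
    have htail := aux_tail hmaj Cw hCw hreg r hr3 hr1
    have hmid : ∫ s in (-(1-r))..(1-r), g s ≤ 4 * ω (1-r) := by
      have hbound : ∀ s ∈ Set.Icc (-(1-r)) (1-r), g s ≤ ω (1-r) * (2/(1-r)) := by
        intro s hs
        have habs : |s| ≤ 1-r := abs_le.mpr ⟨hs.1, hs.2⟩
        have hW : ω (Real.sqrt (2-2*Real.cos s)) ≤ ω (1-r) := by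
          apply hmaj.mono (aux_sqrt_mem s) ⟨le_of_lt hδpos, hδ2⟩
          exact le_trans (aux_sqrt_le_abs s) habs
        have hK : (1-r^2)/((1-r)^2 + r*(2-2*Real.cos s)) ≤ 2/(1-r) := by
          rw [div_le_div_iff₀ (hdenpos s) hδpos]
          nlinarith [Real.cos_le_one s, sq_nonneg (1-r)]
        have hWnn : 0 ≤ ω (Real.sqrt (2-2*Real.cos s)) := hmaj.nonneg _ (aux_sqrt_mem s)
        exact mul_le_mul hW hK (div_nonneg hnum (le_of_lt (hdenpos s))) hωδ
      calc ∫ s in (-(1-r))..(1-r), g s ≤ ∫ _ in (-(1-r))..(1-r), ω (1-r) * (2/(1-r)) :=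
            intervalIntegral.integral_mono_on (by linarith)
              (hgc.intervalIntegrable _ _) intervalIntegrable_const hbound
        _ = (2*(1-r)) * (ω (1-r) * (2/(1-r))) := by
            rw [intervalIntegral.integral_const, smul_eq_mul]; ring
        _ = 4 * ω (1-r) := by field_simp; ring
    rw [hsplit, hleft]
    have hfin : (3*Real.pi^2/2)*(Cw+1)*ω (1-r) + 4 * ω (1-r) + (3*Real.pi^2/2)*(Cw+1)*ω (1-r)
        ≤ (12*Real.pi + 4 + 3*Real.pi^2*(Cw+1)) * ω (1-r) := by nlinarith
    linarith [htail, hmid]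

theorem stmt19 (ω : ℝ → ℝ) (hω : IsRegularMajorant ω) (i : ℍ) (hi : IsImaginaryUnit i)
    (f : ℍ → ℍ) (hf : IsSliceRegular f) (hcont : ContinuousOn f (Metric.closedBall 0 1))
    (C₀ : ℝ) (hC₀ : 0 < C₀)
    (hbd : ∀ x ∈ sliceCircle i, ∀ y ∈ sliceCircle i, |‖f x‖ - ‖f y‖| ≤ C₀ * ω ‖x - y‖)
    (C₁ : ℝ) (hC₁ : 0 < C₁)
    (hlip : ∀ x ∈ sliceDisc i, ∀ y ∈ sliceDisc i, ‖f x - f y‖ ≤ C₁ * ω ‖x - y‖) :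
    ∃ C > 0, ∀ s : ℝ, (s = 1 ∨ s = -1) → ∀ q ∈ unitBall,
      (∀ t ∈ Set.Icc (0:ℝ) (2 * Real.pi),
        (q * star (expI i t)).re ≤
          q.re * Real.cos t + s * (‖q - ((q.re : ℝ) : ℍ)‖ * Real.sin t)) →
      poisson i (fun z => ‖f z‖) q -
          2 * ‖f (((q.re : ℝ) : ℍ) + (s * ‖q - ((q.re : ℝ) : ℍ)‖) • i)‖ ≤
        C * ω (1 - ‖q‖) := by
  obtain ⟨hmaj, Cw, hCw, hreg⟩ := hω
  have hpi0 := Real.pi_pos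
  set C₂ : ℝ := 12*Real.pi + 4 + 3*Real.pi^2*(Cw+1) with hC₂def
  have hC₂pos : 0 < C₂ := by positivity
  refine ⟨2*C₁ + C₀*C₂, by positivity, ?_⟩
  intro s hs q hq hcond
  have hqeq := aux_slice_id hi s hs q hcond
  rw [← hqeq]
  set r : ℝ := ‖q‖ with hrdef
  have hr1 : r < 1 := hq
  have hr0 : 0 ≤ r := norm_nonneg q
  have hδpos : 0 < 1 - r := by linarith
  have hωδ : 0 ≤ ω (1-r) := hmaj.nonneg _ ⟨le_of_lt hδpos, by linarith⟩
  have hr2 : (q.re)^2 + (s * ‖q - ((q.re : ℝ) : ℍ)‖)^2 = r^2 := by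
    have h1 := aux_norm hi q.re (s * ‖q - ((q.re : ℝ) : ℍ)‖)
    rw [← hqeq] at h1
    linarith
  obtain ⟨θ₀, hx, hy⟩ := aux_polar _ _ r hr0 hr2
  have hq2 : q = ((r*Real.cos θ₀ : ℝ):ℍ) + (r*Real.sin θ₀) • i := by
    rw [← hx, ← hy]; exact hqeq
  have hqη : q = r • expI i θ₀ := by
    rw [hq2, expI_def, smul_add, smul_smul]
    push_cast
    rw [Quaternion.coe_mul_eq_smul]
  -- kernel identity
  have hker : ∀ t : ℝ, ‖q - expI i t‖^2 = (1-r)^2 + r*(2-2*Real.cos (t-θ₀)) := by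
    intro t
    calc ‖q - expI i t‖^2
        = ‖((r*Real.cos θ₀ : ℝ):ℍ) + (r*Real.sin θ₀) • i - expI i t‖^2 := by
          rw [← hq2]
      _ = (1-r)^2 + r*(2-2*Real.cos (t-θ₀)) := aux_q_sub hi r θ₀ t
  have hdenpos : ∀ u : ℝ, 0 < (1-r)^2 + r*(2-2*Real.cos u) := by
    intro u; nlinarith [Real.cos_le_one u]
  -- boundary modulus bound
  have hGbd : ∀ t : ℝ, ‖f (expI i t)‖
      ≤ ‖f (expI i θ₀)‖ + C₀ * ω (Real.sqrt (2-2*Real.cos (t-θ₀))) := by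
    intro t
    have h1 := hbd _ (aux_expI_circle hi t) _ (aux_expI_circle hi θ₀)
    have h2 : ‖expI i t - expI i θ₀‖ = Real.sqrt (2-2*Real.cos (t-θ₀)) := by
      rw [← aux_expI_sub hi t θ₀, Real.sqrt_sq (norm_nonneg _)]
    rw [h2] at h1
    have := abs_le.mp h1
    linarith [this.1, this.2]
  -- continuity
  have hexpc : Continuous (fun t : ℝ => expI i t) := by
    simp only [expI_def]
    exact (Quaternion.continuous_coe.comp Real.continuous_cos).add
      (Real.continuous_sin.smul continuous_const)
  have hfc : Continuous (fun t : ℝ => ‖f (expI i t)‖) := by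
    apply Continuous.norm
    apply hcont.comp_continuous hexpc
    intro t
    rw [Metric.mem_closedBall, dist_zero_right, aux_expI_norm hi]
  -- the integrand and shifted integrand
  set g : ℝ → ℝ := fun t => ‖f (expI i t)‖ * (1 - r^2) / ‖q - expI i t‖^2 with hgdef
  set G : ℝ → ℝ := fun u =>
    ‖f (expI i (u+θ₀))‖ * ((1 - r^2) / ((1-r)^2 + r*(2-2*Real.cos u))) with hGdef
  have hgG : ∀ u : ℝ, g (u+θ₀) = G u := by
    intro u
    rw [hgdef, hGdef]
    simp only
    rw [hker (u+θ₀), add_sub_cancel_right, mul_div_assoc]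
  have hccos : Continuous (fun u : ℝ => 2-2*Real.cos u) :=
    continuous_const.sub (continuous_const.mul Real.continuous_cos)
  have hcden : Continuous (fun u : ℝ => (1-r)^2 + r*(2-2*Real.cos u)) :=
    continuous_const.add (continuous_const.mul hccos)
  have hGc : Continuous G := by
    rw [hGdef]
    apply Continuous.mul
    · exact hfc.comp (continuous_id.add continuous_const)
    · exact continuous_const.div hcden (fun u => ne_of_gt (hdenpos u))
  have hper : Function.Periodic g (2*Real.pi) := by
    intro t
    rw [hgdef]
    simp only
    have he : expI i (t + 2*Real.pi) = expI i t := by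
      rw [expI_def, expI_def, Real.cos_add_two_pi, Real.sin_add_two_pi]
    rw [he]
  -- transfer the integral
  have hshift : ∫ t in (0:ℝ)..(2*Real.pi), g t = ∫ u in (-Real.pi)..Real.pi, G u := by
    have h1 := hper.intervalIntegral_add_eq (θ₀ - Real.pi) 0
    have h2 := intervalIntegral.integral_comp_add_right (a := -Real.pi) (b := Real.pi) g θ₀
    calc ∫ t in (0:ℝ)..(2*Real.pi), g t
        = ∫ t in (0:ℝ)..(0 + 2*Real.pi), g t := by norm_num
      _ = ∫ t in (θ₀ - Real.pi)..(θ₀ - Real.pi + 2*Real.pi), g t := h1.symm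
      _ = ∫ t in (-Real.pi + θ₀)..(Real.pi + θ₀), g t := by ring_nf
      _ = ∫ u in (-Real.pi)..Real.pi, g (u + θ₀) := h2.symm
      _ = ∫ u in (-Real.pi)..Real.pi, G u := by
          apply intervalIntegral.integral_congr
          intro u _
          exact hgG u
  -- pointwise bound for G
  have hηnn : (0:ℝ) ≤ ‖f (expI i θ₀)‖ := norm_nonneg _
  have hnum : (0:ℝ) ≤ 1 - r^2 := by nlinarith
  have hKnn : ∀ u : ℝ, 0 ≤ (1 - r^2) / ((1-r)^2 + r*(2-2*Real.cos u)) :=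
    fun u => div_nonneg hnum (le_of_lt (hdenpos u))
  have hGbound : ∀ u ∈ Set.Icc (-Real.pi) Real.pi, G u
      ≤ ‖f (expI i θ₀)‖ * ((1 - r^2) / ((1-r)^2 + r*(2-2*Real.cos u)))
        + C₀ * (ω (Real.sqrt (2-2*Real.cos u))
            * ((1 - r^2) / ((1-r)^2 + r*(2-2*Real.cos u)))) := by
    intro u _
    rw [hGdef]
    simp only
    have h1 := hGbd (u+θ₀)
    rw [add_sub_cancel_right] at h1
    have h2 := mul_le_mul_of_nonneg_right h1 (hKnn u)
    calc ‖f (expI i (u+θ₀))‖ * ((1 - r^2) / ((1-r)^2 + r*(2-2*Real.cos u)))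
        ≤ (‖f (expI i θ₀)‖ + C₀ * ω (Real.sqrt (2-2*Real.cos u)))
            * ((1 - r^2) / ((1-r)^2 + r*(2-2*Real.cos u))) := h2
      _ = _ := by ring
  -- integrate the bound
  have hWc : Continuous (fun u : ℝ => ω (Real.sqrt (2-2*Real.cos u))) := by
    apply ContinuousOn.comp_continuous hmaj.contOn (Real.continuous_sqrt.comp hccos)
    exact fun u => aux_sqrt_mem u
  have hKc : Continuous (fun u : ℝ => (1 - r^2) / ((1-r)^2 + r*(2-2*Real.cos u))) :=
    continuous_const.div hcden (fun u => ne_of_gt (hdenpos u))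
  have hint1 : ∫ u in (-Real.pi)..Real.pi, G u
      ≤ ‖f (expI i θ₀)‖ * (∫ u in (-Real.pi)..Real.pi,
            (1 - r^2) / ((1-r)^2 + r*(2-2*Real.cos u)))
        + C₀ * ∫ u in (-Real.pi)..Real.pi,
            ω (Real.sqrt (2-2*Real.cos u))
              * ((1 - r^2) / ((1-r)^2 + r*(2-2*Real.cos u))) := by
    rw [← intervalIntegral.integral_const_mul, ← intervalIntegral.integral_const_mul,
      ← intervalIntegral.integral_add
        (f := fun u => ‖f (expI i θ₀)‖ * ((1 - r^2) / ((1-r)^2 + r*(2-2*Real.cos u))))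
        (g := fun u => C₀ * (ω (Real.sqrt (2-2*Real.cos u))
          * ((1 - r^2) / ((1-r)^2 + r*(2-2*Real.cos u)))))
        ((continuous_const.mul hKc).intervalIntegrable _ _)
        ((continuous_const.mul (hWc.mul hKc)).intervalIntegrable _ _)]
    exact intervalIntegral.integral_mono_on (by linarith)
      (hGc.intervalIntegrable _ _)
      (((continuous_const.mul hKc).add
        (continuous_const.mul (hWc.mul hKc))).intervalIntegrable _ _) hGbound
  have hK4π := aux_int_K r hr0 hr1
  have hωK := aux_int_omegaK hmaj Cw hCw hreg r hr0 hr1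
  -- boundary value vs interior value
  have hbdry : ‖f (expI i θ₀)‖ ≤ ‖f q‖ + C₁ * ω (1-r) := by
    have := aux_boundary hmaj hi hcont hC₁ hlip r θ₀ hr0 hr1
    rw [← hqη] at this
    exact this
  -- put everything together
  have htotal : ∫ t in (0:ℝ)..(2*Real.pi), g t
      ≤ ‖f (expI i θ₀)‖ * (4*Real.pi) + C₀ * (C₂ * ω (1-r)) := by
    rw [hshift]
    calc ∫ u in (-Real.pi)..Real.pi, G u
        ≤ _ := hint1
      _ ≤ ‖f (expI i θ₀)‖ * (4*Real.pi) + C₀ * (C₂ * ω (1-r)) := by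
          apply add_le_add
          · exact mul_le_mul_of_nonneg_left hK4π hηnn
          · exact mul_le_mul_of_nonneg_left hωK (le_of_lt hC₀)
  have hpoisson : poisson i (fun z => ‖f z‖) q
      = (1/(2*Real.pi)) * ∫ t in (0:ℝ)..(2*Real.pi), g t := rfl
  rw [hpoisson]
  have hfrac : 0 < 1/(2*Real.pi) := by positivity
  have h20 : (1/(2*Real.pi)) * ∫ t in (0:ℝ)..(2*Real.pi), g t
      ≤ (1/(2*Real.pi)) * (‖f (expI i θ₀)‖ * (4*Real.pi) + C₀ * (C₂ * ω (1-r))) :=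
    mul_le_mul_of_nonneg_left htotal (le_of_lt hfrac)
  have h21 : (1/(2*Real.pi)) * (‖f (expI i θ₀)‖ * (4*Real.pi) + C₀ * (C₂ * ω (1-r)))
      ≤ 2 * ‖f (expI i θ₀)‖ + C₀ * C₂ * ω (1-r) := by
    have ha : (1/(2*Real.pi)) * (‖f (expI i θ₀)‖ * (4*Real.pi)) = 2 * ‖f (expI i θ₀)‖ := by
      field_simp; ring
    have hb : (1/(2*Real.pi)) * (C₀ * (C₂ * ω (1-r))) ≤ C₀ * C₂ * ω (1-r) := by
      have h1 : (1:ℝ)/(2*Real.pi) ≤ 1 := by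
        rw [div_le_one (by positivity)]; linarith [Real.pi_gt_three]
      have h2 : 0 ≤ C₀ * (C₂ * ω (1-r)) := by positivity
      have h3 := mul_le_mul_of_nonneg_right h1 h2
      rw [one_mul] at h3
      linarith
    calc (1/(2*Real.pi)) * (‖f (expI i θ₀)‖ * (4*Real.pi) + C₀ * (C₂ * ω (1-r)))
        = (1/(2*Real.pi)) * (‖f (expI i θ₀)‖ * (4*Real.pi))
          + (1/(2*Real.pi)) * (C₀ * (C₂ * ω (1-r))) := by ring
      _ ≤ 2 * ‖f (expI i θ₀)‖ + C₀ * C₂ * ω (1-r) := by rw [ha]; linarith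
  have h22 : 2 * ‖f (expI i θ₀)‖ ≤ 2 * ‖f q‖ + 2 * C₁ * ω (1-r) := by linarith
  linarith
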